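/- arXiv:2003.03876 — 4 statements merged into one kernel-verified Lean document; each statement's English description precedes it below -/
import Mathlib

section
/- Let φ(u) = exp(-u²/2)/√(2π) be the standard normal density and Φ(z) = ∫_{-∞}^z φ(u) du the standard normal cdf. For every z < 0 and every ν > 0 with z < -ν/2, the relative value R(z,ν) = (e^{zν}·Φ(z+ν) − e^{−zν}·Φ(z−ν)) / (e^{−zν} − e^{zν}) satisfies R(z,ν) ≤ −φ(z)/z − Φ(z). -/
open MeasureTheory Real

/-- The standard normal density φ(u) = exp(-u²/2)/√(2π). -/
noncomputable def stdNormalPdf (u : ℝ) : ℝ := Real.exp (-u ^ 2 / 2) / Real.sqrt (2 * Real.pi)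

/-- The standard normal cdf Φ(z) = ∫_{-∞}^z φ(u) du. -/
noncomputable def stdNormalCdf (z : ℝ) : ℝ := ∫ u in Set.Iic z, stdNormalPdf u

lemma stdNormalPdf_integrable : Integrable stdNormalPdf := by
  have h : stdNormalPdf = fun u => Real.exp (-(1/2 : ℝ) * u ^ 2) * (Real.sqrt (2 * Real.pi))⁻¹ := by
    funext u
    have : -u ^ 2 / 2 = -(1/2 : ℝ) * u ^ 2 := by ring
    rw [stdNormalPdf, this, div_eq_mul_inv]
  rw [h]
  exact (integrable_exp_neg_mul_sq (by norm_num)).mul_const _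

lemma stdNormalPdf_continuous : Continuous stdNormalPdf := by
  unfold stdNormalPdf
  fun_prop

lemma stdNormalPdf_nonneg (u : ℝ) : 0 ≤ stdNormalPdf u :=
  div_nonneg (Real.exp_pos _).le (Real.sqrt_nonneg _)

lemma pdf_shift (z t : ℝ) : stdNormalPdf (z + t) = stdNormalPdf z * Real.exp (-(z*t) - t^2/2) := by
  unfold stdNormalPdf
  rw [div_mul_eq_mul_div, ← Real.exp_add]
  congr 1
  ring

lemma cdf_sub (a b : ℝ) : stdNormalCdf b - stdNormalCdf a = ∫ x in a..b, stdNormalPdf x :=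
  intervalIntegral.integral_Iic_sub_Iic stdNormalPdf_integrable.integrableOn
    stdNormalPdf_integrable.integrableOn

lemma ptwise (z ν t : ℝ) :
    Real.exp (z*ν) * stdNormalPdf (z+t) + Real.exp (-z*ν) * stdNormalPdf (z-t)
      ≤ stdNormalPdf z * (Real.exp (z*(ν-t)) + Real.exp (-(z*(ν-t)))) := by
  have h1 : Real.exp (z*ν) * stdNormalPdf (z+t)
      = stdNormalPdf z * Real.exp (-t^2/2 + z*(ν-t)) := by
    rw [pdf_shift, mul_left_comm, ← Real.exp_add]
    congr 2
    ring
  have h2 : Real.exp (-z*ν) * stdNormalPdf (z-t)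
      = stdNormalPdf z * Real.exp (-t^2/2 + -(z*(ν-t))) := by
    have : z - t = z + (-t) := by ring
    rw [this, pdf_shift, mul_left_comm, ← Real.exp_add]
    congr 2
    ring
  rw [h1, h2, mul_add]
  have hφ := stdNormalPdf_nonneg z
  have b1 : Real.exp (-t^2/2 + z*(ν-t)) ≤ Real.exp (z*(ν-t)) := by
    apply Real.exp_le_exp.mpr; nlinarith [sq_nonneg t]
  have b2 : Real.exp (-t^2/2 + -(z*(ν-t))) ≤ Real.exp (-(z*(ν-t))) := by
    apply Real.exp_le_exp.mpr; nlinarith [sq_nonneg t]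
  exact add_le_add (mul_le_mul_of_nonneg_left b1 hφ) (mul_le_mul_of_nonneg_left b2 hφ)

lemma cosh_integral (z ν : ℝ) (hz : z ≠ 0) :
    (∫ t in (0:ℝ)..ν, (Real.exp (z*(ν-t)) + Real.exp (-(z*(ν-t)))))
      = (Real.exp (-(z*ν)) - Real.exp (z*ν)) / (-z) := by
  have key : ∀ t : ℝ, HasDerivAt
      (fun t => (Real.exp (z*(ν-t)) - Real.exp (-(z*(ν-t)))) / (-z))
      (Real.exp (z*(ν-t)) + Real.exp (-(z*(ν-t)))) t := by
    intro t
    have hlin : HasDerivAt (fun t : ℝ => z*(ν-t)) (-z) t := by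
      simpa using ((hasDerivAt_id t).const_sub ν).const_mul z
    have H := ((hlin.exp).sub (hlin.neg.exp)).div_const (-z)
    refine H.congr_deriv ?_
    simp only [Pi.neg_apply]
    rw [div_eq_iff (neg_ne_zero.mpr hz)]
    ring
  rw [intervalIntegral.integral_eq_sub_of_hasDerivAt (fun t _ => key t)
    (by apply Continuous.intervalIntegrable; fun_prop)]
  field_simp
  simp only [sub_self, mul_zero, sub_zero, neg_zero, Real.exp_zero]
  ring

/-- For z < 0, ν > 0 with z < -ν/2, the strangle's relative value
R(z,ν) = (e^{zν}Φ(z+ν) − e^{−zν}Φ(z−ν))/(e^{−zν} − e^{zν}) is bounded by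
−φ(z)/z − Φ(z). -/
theorem strangle_relative_value_le_bound (z ν : ℝ) (hz : z < 0) (hν : 0 < ν)
    (hB : z < -ν / 2) :
    (Real.exp (z * ν) * stdNormalCdf (z + ν) - Real.exp (-z * ν) * stdNormalCdf (z - ν)) /
      (Real.exp (-z * ν) - Real.exp (z * ν)) ≤
      -stdNormalPdf z / z - stdNormalCdf z := by
  have hzν : z * ν < -z * ν := by nlinarith
  have hD : 0 < Real.exp (-z * ν) - Real.exp (z * ν) := by
    have := Real.exp_lt_exp.mpr hzν; linarith
  rw [div_le_iff₀ hD]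
  -- express cdf values via interval integrals from z
  have h1 : stdNormalCdf (z + ν) = stdNormalCdf z + ∫ t in (0:ℝ)..ν, stdNormalPdf (z + t) := by
    rw [intervalIntegral.integral_comp_add_left stdNormalPdf z]
    have := cdf_sub z (z + ν)
    simp only [add_zero] at *
    linarith
  have h2 : stdNormalCdf (z - ν) = stdNormalCdf z - ∫ t in (0:ℝ)..ν, stdNormalPdf (z - t) := by
    rw [intervalIntegral.integral_comp_sub_left stdNormalPdf z]
    have := cdf_sub (z - ν) z
    simp only [sub_zero] at *
    linarith
  set A := ∫ t in (0:ℝ)..ν, stdNormalPdf (z + t) with hA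
  set B := ∫ t in (0:ℝ)..ν, stdNormalPdf (z - t) with hB2
  have key : Real.exp (z * ν) * A + Real.exp (-z * ν) * B
      ≤ (-stdNormalPdf z / z) * (Real.exp (-z * ν) - Real.exp (z * ν)) := by
    have hsum : Real.exp (z * ν) * A + Real.exp (-z * ν) * B
        = ∫ t in (0:ℝ)..ν,
            (Real.exp (z*ν) * stdNormalPdf (z+t) + Real.exp (-z*ν) * stdNormalPdf (z-t)) := by
      have hI1 : IntervalIntegrable (fun t => Real.exp (z*ν) * stdNormalPdf (z+t))
          volume 0 ν :=
        (continuous_const.mul (stdNormalPdf_continuous.comp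
          (continuous_const.add continuous_id))).intervalIntegrable _ _
      have hI2 : IntervalIntegrable (fun t => Real.exp (-z*ν) * stdNormalPdf (z-t))
          volume 0 ν :=
        (continuous_const.mul (stdNormalPdf_continuous.comp
          (continuous_const.sub continuous_id))).intervalIntegrable _ _
      rw [hA, hB2, ← intervalIntegral.integral_const_mul, ← intervalIntegral.integral_const_mul]
      exact (intervalIntegral.integral_add hI1 hI2).symm
    have hmono : (∫ t in (0:ℝ)..ν,
            (Real.exp (z*ν) * stdNormalPdf (z+t) + Real.exp (-z*ν) * stdNormalPdf (z-t)))
        ≤ ∫ t in (0:ℝ)..ν, stdNormalPdf z * (Real.exp (z*(ν-t)) + Real.exp (-(z*(ν-t)))) := by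
      apply intervalIntegral.integral_mono_on hν.le
      · apply Continuous.intervalIntegrable
        have c1 : Continuous fun t : ℝ => stdNormalPdf (z + t) :=
          stdNormalPdf_continuous.comp (by fun_prop)
        have c2 : Continuous fun t : ℝ => stdNormalPdf (z - t) :=
          stdNormalPdf_continuous.comp (by fun_prop)
        fun_prop
      · apply Continuous.intervalIntegrable; fun_prop
      · intro t _
        exact ptwise z ν t
    have hval : (∫ t in (0:ℝ)..ν, stdNormalPdf z * (Real.exp (z*(ν-t)) + Real.exp (-(z*(ν-t)))))
        = (-stdNormalPdf z / z) * (Real.exp (-z * ν) - Real.exp (z * ν)) := by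
      rw [intervalIntegral.integral_const_mul, cosh_integral z ν hz.ne]
      have h0 : Real.exp (-(z * ν)) = Real.exp (-z * ν) := by norm_num
      rw [h0, div_mul_eq_mul_div, mul_div_assoc',
        div_eq_div_iff (neg_ne_zero.mpr hz.ne) hz.ne]
      ring
    rw [hsum]
    calc _ ≤ _ := hmono
    _ = _ := hval
  rw [h1, h2]
  nlinarith [key]
end

section
/- Let φ(u) = exp(-u²/2)/√(2π) be the standard normal density and Φ the standard normal cdf. For every z < 0 and every ν > 0 with z < -ν/2, the relative value R(z,ν) = (e^{zν}·Φ(z+ν) − e^{−zν}·Φ(z−ν)) / (e^{−zν} − e^{zν}) is strictly positive. -/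
open MeasureTheory Real

lemma stdNormalPdf_pos (u : ℝ) : 0 < stdNormalPdf u := by
  have : 0 < Real.sqrt (2 * Real.pi) := Real.sqrt_pos.2 (by positivity)
  exact div_pos (Real.exp_pos _) this

lemma numerator_aux (z ν : ℝ) (hν : 0 < ν) :
    Real.exp (-(2 * z * ν)) * stdNormalCdf (z - ν) < stdNormalCdf (z + ν) := by
  set c : ℝ := Real.exp (-(2 * z * ν)) with hc
  -- change of variables: Φ(z-ν) = ∫_{Iic (z+ν)} φ(u - 2ν) du
  have hcov : stdNormalCdf (z - ν) = ∫ u in Set.Iic (z + ν), stdNormalPdf (u + -(2*ν)) := by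
    have hmp : MeasurePreserving (fun u : ℝ => u + -(2*ν)) volume volume :=
      measurePreserving_add_right volume _
    have hemb : MeasurableEmbedding (fun u : ℝ => u + -(2*ν)) :=
      measurableEmbedding_addRight _
    have := hmp.setIntegral_preimage_emb hemb stdNormalPdf (Set.Iic (z - ν))
    have hpre : (fun u : ℝ => u + -(2*ν)) ⁻¹' Set.Iic (z - ν) = Set.Iic (z + ν) := by
      ext u; simp [Set.mem_Iic]; constructor <;> intro h <;> linarith
    rw [hpre] at this
    rw [stdNormalCdf, ← this]
  -- pointwise identity: c * φ(u - 2ν) = φ(u) * exp(2ν(u - z - ν))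
  have hpt : ∀ u : ℝ, c * stdNormalPdf (u + -(2*ν))
      = stdNormalPdf u * Real.exp (2 * ν * (u - z - ν)) := by
    intro u
    simp only [stdNormalPdf, hc]
    rw [div_mul_eq_mul_div, mul_comm, div_mul_eq_mul_div, ← Real.exp_add, ← Real.exp_add]
    ring_nf
  -- integrability
  have hint1 : IntegrableOn stdNormalPdf (Set.Iic (z + ν)) :=
    stdNormalPdf_integrable.integrableOn
  have hint2 : IntegrableOn (fun u => c * stdNormalPdf (u + -(2*ν))) (Set.Iic (z + ν)) :=
    ((stdNormalPdf_integrable.comp_add_right (-(2*ν))).const_mul c).integrableOn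
  -- lower bound via Iic z
  have hle1 : ∫ u in Set.Iic (z + ν), (stdNormalPdf u - c * stdNormalPdf (u + -(2*ν))) ≥
      ∫ u in Set.Iic z, (stdNormalPdf u - c * stdNormalPdf (u + -(2*ν))) := by
    apply setIntegral_mono_set (hint1.sub hint2)
    · refine (ae_restrict_iff' measurableSet_Iic).2 (Filter.Eventually.of_forall fun u hu => ?_)
      simp only [Pi.zero_apply, Pi.sub_apply]
      rw [sub_nonneg, hpt u]
      have : Real.exp (2 * ν * (u - z - ν)) ≤ 1 := by
        rw [Real.exp_le_one_iff]
        have : u ≤ z + ν := hu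
        nlinarith
      nlinarith [ (stdNormalPdf_pos u).le ]
    · exact HasSubset.Subset.eventuallyLE (Set.Iic_subset_Iic.2 (by linarith))
  have hle2 : ∫ u in Set.Iic z, (stdNormalPdf u - c * stdNormalPdf (u + -(2*ν))) ≥
      ∫ u in Set.Iic z, (1 - Real.exp (-(2 * ν ^ 2))) * stdNormalPdf u := by
    apply setIntegral_mono_on (stdNormalPdf_integrable.integrableOn.const_mul _)
      ((hint1.mono_set (Set.Iic_subset_Iic.2 (by linarith))).sub (hint2.mono_set (Set.Iic_subset_Iic.2 (by linarith)))) measurableSet_Iic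
    intro u hu
    simp only [Pi.sub_apply]
    rw [hpt u]
    have h1 : Real.exp (2 * ν * (u - z - ν)) ≤ Real.exp (-(2 * ν ^ 2)) := by
      apply Real.exp_le_exp.2
      have : u ≤ z := hu
      nlinarith
    nlinarith [ (stdNormalPdf_pos u).le ]
  have hpos : 0 < ∫ u in Set.Iic z, (1 - Real.exp (-(2 * ν ^ 2))) * stdNormalPdf u := by
    rw [integral_const_mul]
    apply mul_pos
    · rw [sub_pos]
      exact Real.exp_lt_one_iff.2 (by nlinarith)
    · rw [setIntegral_pos_iff_support_of_nonneg_ae]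
      · have : Function.support stdNormalPdf = Set.univ := by
          ext u; simp [Function.mem_support, (stdNormalPdf_pos u).ne']
        rw [this, Set.univ_inter]
        simp [Real.volume_Iic]
      · exact Filter.Eventually.of_forall fun u => (stdNormalPdf_pos u).le
      · exact stdNormalPdf_integrable.integrableOn
  have : 0 < ∫ u in Set.Iic (z + ν), (stdNormalPdf u - c * stdNormalPdf (u + -(2*ν))) :=
    lt_of_lt_of_le hpos (le_trans hle2 hle1)
  rw [integral_sub hint1 hint2, integral_const_mul] at this
  rw [hcov, stdNormalCdf]
  linarith

/-- For z < 0, ν > 0 with z < -ν/2, the strangle's relative value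
R(z,ν) = (e^{zν}Φ(z+ν) − e^{−zν}Φ(z−ν))/(e^{−zν} − e^{zν}) is strictly positive. -/
theorem strangle_relative_value_pos (z ν : ℝ) (hz : z < 0) (hν : 0 < ν)
    (hB : z < -ν / 2) :
    0 < (Real.exp (z * ν) * stdNormalCdf (z + ν) - Real.exp (-z * ν) * stdNormalCdf (z - ν)) /
      (Real.exp (-z * ν) - Real.exp (z * ν)) := by
  apply div_pos
  · have h := numerator_aux z ν hν
    have hid : Real.exp (-z * ν) = Real.exp (z * ν) * Real.exp (-(2 * z * ν)) := by
      rw [← Real.exp_add]; ring_nf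
    rw [hid, mul_assoc, sub_pos]
    exact mul_lt_mul_of_pos_left h (Real.exp_pos _)
  · rw [sub_pos]
    exact Real.exp_lt_exp.2 (by nlinarith)
end

section
/- Let φ(u) = exp(-u²/2)/√(2π) be the standard normal density and Φ the standard normal cdf. Fix z < 0. Then the limit as ν → 0⁺ of R(z,ν) = (e^{zν}·Φ(z+ν) − e^{−zν}·Φ(z−ν)) / (e^{−zν} − e^{zν}) equals −φ(z)/z − Φ(z). -/
open MeasureTheory Real

lemma stdNormalCdf_hasDerivAt (x : ℝ) :
    HasDerivAt stdNormalCdf (stdNormalPdf x) x := by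
  have key : ∀ y : ℝ, stdNormalCdf y = stdNormalCdf 0 + ∫ t in (0:ℝ)..y, stdNormalPdf t := by
    intro y
    have := intervalIntegral.integral_Iic_sub_Iic
      (stdNormalPdf_integrable.integrableOn (s := Set.Iic 0))
      (stdNormalPdf_integrable.integrableOn (s := Set.Iic y)) (μ := volume)
    unfold stdNormalCdf
    linarith [this]
  have h1 : HasDerivAt (fun y => ∫ t in (0:ℝ)..y, stdNormalPdf t) (stdNormalPdf x) x :=
    intervalIntegral.integral_hasDerivAt_right
      stdNormalPdf_integrable.intervalIntegrable
      (stdNormalPdf_continuous.stronglyMeasurableAtFilter _ _)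
      (stdNormalPdf_continuous.continuousAt)
  have h2 := h1.const_add (stdNormalCdf 0)
  exact h2.congr_of_eventuallyEq (Filter.Eventually.of_forall key)

/-- For fixed z < 0, R(z,ν) → −φ(z)/z − Φ(z) as ν → 0⁺. -/
theorem strangle_relative_value_tendsto_bound (z : ℝ) (hz : z < 0) :
    Filter.Tendsto
      (fun ν : ℝ =>
        (Real.exp (z * ν) * stdNormalCdf (z + ν) - Real.exp (-z * ν) * stdNormalCdf (z - ν)) /
          (Real.exp (-z * ν) - Real.exp (z * ν)))
      (nhdsWithin 0 (Set.Ioi 0))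
      (nhds (-stdNormalPdf z / z - stdNormalCdf z)) := by
  have hzne : z ≠ 0 := ne_of_lt hz
  set N : ℝ → ℝ := fun ν =>
    Real.exp (z * ν) * stdNormalCdf (z + ν) - Real.exp (-z * ν) * stdNormalCdf (z - ν) with hNdef
  set D : ℝ → ℝ := fun ν => Real.exp (-z * ν) - Real.exp (z * ν) with hDdef
  -- derivatives at 0
  have hmul : HasDerivAt (fun ν : ℝ => z * ν) z 0 := by
    simpa using (hasDerivAt_id (0:ℝ)).const_mul z
  have hmul' : HasDerivAt (fun ν : ℝ => -z * ν) (-z) 0 := by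
    simpa using (hasDerivAt_id (0:ℝ)).const_mul (-z)
  have he1 : HasDerivAt (fun ν : ℝ => Real.exp (z * ν)) z 0 := by
    simpa using hmul.exp
  have he2 : HasDerivAt (fun ν : ℝ => Real.exp (-z * ν)) (-z) 0 := by
    simpa using hmul'.exp
  have hc1 : HasDerivAt (fun ν : ℝ => stdNormalCdf (z + ν)) (stdNormalPdf z) 0 := by
    have := (stdNormalCdf_hasDerivAt (z + 0)).comp 0 ((hasDerivAt_id (0:ℝ)).const_add z)
    simp only [add_zero, mul_one] at this
    exact this
  have hc2 : HasDerivAt (fun ν : ℝ => stdNormalCdf (z - ν)) (-stdNormalPdf z) 0 := by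
    have hinner : HasDerivAt (fun ν : ℝ => z - ν) (-1) 0 := by
      exact (hasDerivAt_id (0:ℝ)).const_sub z
    have := (stdNormalCdf_hasDerivAt (z - 0)).comp 0 hinner
    simp only [sub_zero, mul_neg, mul_one] at this
    exact this
  have hN : HasDerivAt N (2 * z * stdNormalCdf z + 2 * stdNormalPdf z) 0 := by
    have := (he1.mul hc1).sub (he2.mul hc2)
    refine this.congr_deriv ?_
    simp [stdNormalCdf, stdNormalPdf]
    ring
  have hD : HasDerivAt D (-(2 * z)) 0 := by
    have := he2.sub he1
    refine this.congr_deriv ?_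
    ring
  have hN0 : N 0 = 0 := by simp [hNdef]
  have hD0 : D 0 = 0 := by simp [hDdef]
  have hsub : nhdsWithin (0:ℝ) (Set.Ioi 0) ≤ nhdsWithin (0:ℝ) {(0:ℝ)}ᶜ :=
    nhdsWithin_mono 0 (fun x hx => ne_of_gt hx)
  have hNt : Filter.Tendsto (fun ν => N ν / ν) (nhdsWithin 0 (Set.Ioi 0))
      (nhds (2 * z * stdNormalCdf z + 2 * stdNormalPdf z)) := by
    have := (hasDerivAt_iff_tendsto_slope.mp hN).mono_left hsub
    refine this.congr' ?_
    filter_upwards [self_mem_nhdsWithin] with ν hν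
    simp [slope_def_field, hN0]
  have hDt : Filter.Tendsto (fun ν => D ν / ν) (nhdsWithin 0 (Set.Ioi 0))
      (nhds (-(2 * z))) := by
    have := (hasDerivAt_iff_tendsto_slope.mp hD).mono_left hsub
    refine this.congr' ?_
    filter_upwards [self_mem_nhdsWithin] with ν hν
    simp [slope_def_field, hD0]
  have hq : Filter.Tendsto (fun ν => (N ν / ν) / (D ν / ν)) (nhdsWithin 0 (Set.Ioi 0))
      (nhds ((2 * z * stdNormalCdf z + 2 * stdNormalPdf z) / (-(2 * z)))) :=
    hNt.div hDt (by simpa using hzne)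
  have heq : (2 * z * stdNormalCdf z + 2 * stdNormalPdf z) / (-(2 * z))
      = -stdNormalPdf z / z - stdNormalCdf z := by
    field_simp
    ring
  rw [← heq]
  refine hq.congr' ?_
  filter_upwards [self_mem_nhdsWithin] with ν hν
  have hν0 : ν ≠ 0 := ne_of_gt hν
  rw [div_div_div_cancel_right₀]
  exact hν0
end

section
/- Let φ be the standard normal density and Φ the standard normal cdf. For every z < 0 and ν > 0 with z < −ν/2, one has φ(z+ν) − φ(z−ν) + z·(Φ(z+ν) − Φ(z−ν)) ≤ 0. -/
open MeasureTheory Real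

lemma stdNormalPdf_hasDerivAt (u : ℝ) :
    HasDerivAt stdNormalPdf (-u * stdNormalPdf u) u := by
  have h1 : HasDerivAt (fun x : ℝ => -x ^ 2 / 2) (-u) u := by
    have := ((hasDerivAt_pow 2 u).neg.div_const 2)
    refine this.congr_deriv ?_
    ring
  have h2 : HasDerivAt (fun x : ℝ => Real.exp (-x ^ 2 / 2))
      (Real.exp (-u ^ 2 / 2) * (-u)) u := h1.exp
  have h3 := h2.div_const (Real.sqrt (2 * Real.pi))
  refine h3.congr_deriv ?_
  unfold stdNormalPdf
  ring

lemma stdNormalCdf_sub (a b : ℝ) :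
    stdNormalCdf b - stdNormalCdf a = ∫ u in a..b, stdNormalPdf u := by
  exact intervalIntegral.integral_Iic_sub_Iic stdNormalPdf_integrable.integrableOn
    stdNormalPdf_integrable.integrableOn

lemma stdNormalPdf_sub (a b : ℝ) :
    stdNormalPdf b - stdNormalPdf a = ∫ u in a..b, (-u) * stdNormalPdf u := by
  refine (intervalIntegral.integral_eq_sub_of_hasDerivAt
    (fun x _ => stdNormalPdf_hasDerivAt x) ?_).symm
  exact ((continuous_id.neg.mul stdNormalPdf_continuous)).intervalIntegrable _ _

/-- Over the practical domain (z < 0, ν > 0, z < −ν/2), one has B + z·D ≤ 0, where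
B = φ(z+ν) − φ(z−ν) and D = Φ(z+ν) − Φ(z−ν). -/
theorem strangle_B_add_z_mul_D_nonpos (z ν : ℝ) (hz : z < 0) (hν : 0 < ν)
    (hB : z < -ν / 2) :
    stdNormalPdf (z + ν) - stdNormalPdf (z - ν) +
      z * (stdNormalCdf (z + ν) - stdNormalCdf (z - ν)) ≤ 0 := by
  rw [stdNormalCdf_sub, stdNormalPdf_sub]
  have hint1 : IntervalIntegrable (fun u => (-u) * stdNormalPdf u) volume (z - ν) (z + ν) :=
    (continuous_id.neg.mul stdNormalPdf_continuous).intervalIntegrable _ _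
  have hint2 : IntervalIntegrable (fun u => z * stdNormalPdf u) volume (z - ν) (z + ν) :=
    (continuous_const.mul stdNormalPdf_continuous).intervalIntegrable _ _
  have step1 : (∫ u in (z - ν)..(z + ν), (-u) * stdNormalPdf u) +
      z * ∫ u in (z - ν)..(z + ν), stdNormalPdf u =
      ∫ u in (z - ν)..(z + ν), (z - u) * stdNormalPdf u := by
    rw [← intervalIntegral.integral_const_mul, ← intervalIntegral.integral_add hint1 hint2]
    congr 1; funext u; ring
  rw [step1]
  -- substitute u = z + t
  have step2 : (∫ u in (z - ν)..(z + ν), (z - u) * stdNormalPdf u) =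
      ∫ t in (-ν)..ν, (-t) * stdNormalPdf (z + t) := by
    have := intervalIntegral.integral_comp_add_left
      (a := -ν) (b := ν) (fun u => (z - u) * stdNormalPdf u) z
    rw [show z - ν = z + -ν by ring, ← this]
    congr 1
    funext t; ring_nf
  rw [step2]
  -- split and reflect
  have hintc : ∀ a b : ℝ, IntervalIntegrable (fun t => (-t) * stdNormalPdf (z + t)) volume a b :=
    fun a b => (continuous_id.neg.mul
      (stdNormalPdf_continuous.comp (continuous_const.add continuous_id))).intervalIntegrable _ _
  have split : (∫ t in (-ν)..ν, (-t) * stdNormalPdf (z + t)) =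
      (∫ t in (-ν)..(0:ℝ), (-t) * stdNormalPdf (z + t)) +
      ∫ t in (0:ℝ)..ν, (-t) * stdNormalPdf (z + t) :=
    (intervalIntegral.integral_add_adjacent_intervals (hintc _ _) (hintc _ _)).symm
  have reflect : (∫ t in (-ν)..(0:ℝ), (-t) * stdNormalPdf (z + t)) =
      ∫ t in (0:ℝ)..ν, t * stdNormalPdf (z - t) := by
    have := intervalIntegral.integral_comp_neg (a := 0) (b := ν)
      (fun t => (-t) * stdNormalPdf (z + t))
    simp only [neg_neg, neg_zero] at this
    rw [← this]
    simp only [← sub_eq_add_neg]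
  rw [split, reflect]
  have combine : (∫ t in (0:ℝ)..ν, t * stdNormalPdf (z - t)) +
      (∫ t in (0:ℝ)..ν, (-t) * stdNormalPdf (z + t)) =
      ∫ t in (0:ℝ)..ν, t * (stdNormalPdf (z - t) - stdNormalPdf (z + t)) := by
    have hi1 : IntervalIntegrable (fun t => t * stdNormalPdf (z - t)) volume 0 ν := by
      apply Continuous.intervalIntegrable
      have : Continuous stdNormalPdf := stdNormalPdf_continuous
      fun_prop
    have hi2 : IntervalIntegrable (fun t => (-t) * stdNormalPdf (z + t)) volume 0 ν := by
      apply Continuous.intervalIntegrable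
      have : Continuous stdNormalPdf := stdNormalPdf_continuous
      fun_prop
    rw [← intervalIntegral.integral_add hi1 hi2]
    congr 1; funext t; ring
  rw [combine]
  -- pointwise nonpositivity
  have key : ∀ t ∈ Set.Icc (0:ℝ) ν, t * (stdNormalPdf (z - t) - stdNormalPdf (z + t)) ≤ 0 := by
    intro t ht
    obtain ⟨ht0, htν⟩ := ht
    have hpdf : stdNormalPdf (z - t) ≤ stdNormalPdf (z + t) := by
      unfold stdNormalPdf
      have hc : (0:ℝ) < Real.sqrt (2 * Real.pi) := Real.sqrt_pos.mpr (by positivity)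
      have hexp : Real.exp (-(z - t) ^ 2 / 2) ≤ Real.exp (-(z + t) ^ 2 / 2) :=
        Real.exp_le_exp.mpr (by nlinarith)
      exact (div_le_div_iff_of_pos_right hc).mpr hexp
    have : stdNormalPdf (z - t) - stdNormalPdf (z + t) ≤ 0 := by linarith
    exact mul_nonpos_of_nonneg_of_nonpos ht0 this
  rw [← neg_nonneg, ← intervalIntegral.integral_neg]
  exact intervalIntegral.integral_nonneg (le_of_lt hν) fun u hu => neg_nonneg.mpr (key u hu)
end
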